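/- With the eigenvalue-parametrized family F(p) = A(y(p)) / ∏_{t<u}(s_u(p) − s_t(p)), the 2-point function G_{|ab|} := (1/(iV)) · F′(0)/F(0) equals −(λ²/(iV)) · Σ_{i≠a} 1/((E_a² − E_i²)(E_a² − E_b²)) + (λ²/(iV)) · Σ_{i≠b} 1/((E_b² − E_i²)(E_a² − E_b²)) − (λ/(iν)) · (1/(E_a² − E_b²)) · (∂_a A)(z)/A(z) + (λ/(iν)) · (1/(E_a² − E_b²)) · (∂_b A)(z)/A(z). -/

import Mathlib

noncomputable section

open Finset

/-- Partial derivative of `F` in the `k`-th coordinate. -/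
def pd {N : ℕ} (k : Fin N) (F : (Fin N → ℝ) → ℂ) : (Fin N → ℝ) → ℂ :=
  fun x => fderiv ℝ F x (Pi.single k 1)

set_option maxHeartbeats 1000000 in
/-- **The 2-point function `G_{|ab|}` of the `Φ³₂` matrix model.**
With the eigenvalue-parametrized family `F(p) = A(y(p)) / ∏_{t<u}(s_u(p) − s_t(p))`,
`G_{|ab|} = (1/(iV)) F′(0)/F(0)
  = −(λ²/(iV)) Σ_{i≠a} 1/((E_a²−E_i²)(E_a²−E_b²))
    + (λ²/(iV)) Σ_{i≠b} 1/((E_b²−E_i²)(E_a²−E_b²))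
    − (λ/(iν)) (∂_a A)(z)/((E_a²−E_b²) A(z)) + (λ/(iν)) (∂_b A)(z)/((E_a²−E_b²) A(z))`. -/
theorem two_point_function {N : ℕ} (lam V κ ν : ℝ)
    (hlκ : 0 < lam * κ) (hlam : lam ≠ 0) (hV : V ≠ 0) (hκ : κ ≠ 0)
    (hν : ν ^ 3 = lam * V)
    (E : Fin N → ℝ) (hE : ∀ i j, i ≠ j → E i ^ 2 ≠ E j ^ 2)
    (a b : Fin N) (hba : b < a) (hEba : E b ^ 2 < E a ^ 2)
    (d : Fin N → ℝ) (hd : ∀ t, d t = E t ^ 2 / (lam * κ) - 1)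
    (z : Fin N → ℝ) (hz : ∀ k, z k = -V * E k ^ 2 / (ν * lam) + V * κ / ν)
    (A : (Fin N → ℝ) → ℂ) (hA : ContDiff ℝ 1 A) (hAz : A z ≠ 0)
    (s : ℝ → Fin N → ℝ)
    (hs : ∀ p t, s p t =
      if t = a then
        (d a + d b + Real.sqrt ((d a - d b) ^ 2 + 4 * p / κ ^ 2)) / 2
      else if t = b then
        (d a + d b - Real.sqrt ((d a - d b) ^ 2 + 4 * p / κ ^ 2)) / 2
      else d t)
    (y : ℝ → Fin N → ℝ) (hy : ∀ p k, y p k = -V * κ * s p k / ν)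
    (F : ℝ → ℂ)
    (hF : ∀ p, F p = A (y p) /
      ((∏ q ∈ Finset.univ.filter (fun q : Fin N × Fin N => q.1 < q.2),
          (s p q.2 - s p q.1) : ℝ) : ℂ)) :
    1 / (Complex.I * (V : ℂ)) * deriv F 0 / F 0 =
      -((lam : ℂ) ^ 2 / (Complex.I * (V : ℂ))) *
          ∑ i ∈ Finset.univ.filter (fun i => i ≠ a),
            1 / (((E a ^ 2 - E i ^ 2 : ℝ) : ℂ) * ((E a ^ 2 - E b ^ 2 : ℝ) : ℂ)) +
        (lam : ℂ) ^ 2 / (Complex.I * (V : ℂ)) *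
          ∑ i ∈ Finset.univ.filter (fun i => i ≠ b),
            1 / (((E b ^ 2 - E i ^ 2 : ℝ) : ℂ) * ((E a ^ 2 - E b ^ 2 : ℝ) : ℂ)) -
        (lam : ℂ) / (Complex.I * (ν : ℂ)) * (1 / ((E a ^ 2 - E b ^ 2 : ℝ) : ℂ)) *
          pd a A z / A z +
        (lam : ℂ) / (Complex.I * (ν : ℂ)) * (1 / ((E a ^ 2 - E b ^ 2 : ℝ) : ℂ)) *
          pd b A z / A z := by
  classical
  have hlκ0 : lam * κ ≠ 0 := ne_of_gt hlκ
  have hν0 : ν ≠ 0 := by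
    intro h
    have h2 : lam * V = 0 := by rw [← hν, h]; ring
    rcases mul_eq_zero.mp h2 with h' | h'
    · exact hlam h'
    · exact hV h'
  have habne : a ≠ b := hba.ne'
  have hbane : b ≠ a := hba.ne
  have hdne : ∀ i j : Fin N, i ≠ j → d i ≠ d j := by
    intro i j hij h
    apply hE i j hij
    rw [hd, hd] at h
    have h2 : E i ^ 2 / (lam * κ) = E j ^ 2 / (lam * κ) := by linarith
    field_simp [hlκ0] at h2
    exact h2
  have hΔ : d a - d b = (E a ^ 2 - E b ^ 2) / (lam * κ) := by rw [hd, hd]; ring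
  have hΔpos : 0 < d a - d b := by
    rw [hΔ]; exact div_pos (sub_pos.mpr hEba) hlκ
  have hΔ0 : d a - d b ≠ 0 := ne_of_gt hΔpos
  have hEab0 : E a ^ 2 - E b ^ 2 ≠ 0 := sub_ne_zero.mpr (hE a b habne)
  -- derivative of the square root
  have hinner : HasDerivAt (fun p : ℝ => (d a - d b) ^ 2 + 4 * p / κ ^ 2) (4 / κ ^ 2) 0 := by
    have h1 : HasDerivAt (fun p : ℝ => 4 * p / κ ^ 2) (4 * 1 / κ ^ 2) 0 :=
      ((hasDerivAt_id (0 : ℝ)).const_mul 4).div_const (κ ^ 2)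
    have h2 := h1.const_add ((d a - d b) ^ 2)
    simpa using h2
  have hsqrt0 : Real.sqrt ((d a - d b) ^ 2 + 4 * (0 : ℝ) / κ ^ 2) = d a - d b := by
    rw [show (d a - d b) ^ 2 + 4 * (0 : ℝ) / κ ^ 2 = (d a - d b) ^ 2 by ring]
    exact Real.sqrt_sq hΔpos.le
  have hg : HasDerivAt (fun p : ℝ => Real.sqrt ((d a - d b) ^ 2 + 4 * p / κ ^ 2))
      (2 / (κ ^ 2 * (d a - d b))) 0 := by
    have hne : (d a - d b) ^ 2 + 4 * (0 : ℝ) / κ ^ 2 ≠ 0 := by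
      rw [show (d a - d b) ^ 2 + 4 * (0 : ℝ) / κ ^ 2 = (d a - d b) ^ 2 by ring]
      exact pow_ne_zero 2 hΔ0
    have h := hinner.sqrt hne
    rw [hsqrt0] at h
    convert h using 1
    field_simp [hκ, hΔ0]
    ring
  -- derivative of the eigenvalues
  set c : Fin N → ℝ := fun t =>
    if t = a then 1 / (κ ^ 2 * (d a - d b))
    else if t = b then -(1 / (κ ^ 2 * (d a - d b))) else 0 with hc
  have hca : c a = 1 / (κ ^ 2 * (d a - d b)) := by simp [hc]
  have hcb : c b = -(1 / (κ ^ 2 * (d a - d b))) := by simp [hc, hbane]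
  have hs0 : ∀ t, s 0 t = d t := by
    intro t
    rw [hs]
    rcases eq_or_ne t a with rfl | h1
    · rw [if_pos rfl, hsqrt0]; ring
    · rcases eq_or_ne t b with rfl | h2
      · rw [if_neg h1, if_pos rfl, hsqrt0]; ring
      · rw [if_neg h1, if_neg h2]
  have hsd : ∀ t, HasDerivAt (fun p => s p t) (c t) 0 := by
    intro t
    have hfe : (fun p => s p t) = fun p =>
        (if t = a then (d a + d b + Real.sqrt ((d a - d b) ^ 2 + 4 * p / κ ^ 2)) / 2
         else if t = b then (d a + d b - Real.sqrt ((d a - d b) ^ 2 + 4 * p / κ ^ 2)) / 2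
         else d t) := funext fun p => hs p t
    rw [hfe]
    by_cases h1 : t = a
    · simp only [h1, if_pos rfl, hca]
      have h := (hg.const_add (d a + d b)).div_const 2
      rw [show (1:ℝ) / (κ ^ 2 * (d a - d b)) = 2 / (κ ^ 2 * (d a - d b)) / 2 by ring]
      simpa using h
    · by_cases h2 : t = b
      · simp only [h2, if_neg (h2 ▸ h1), if_pos rfl, hcb]
        have h := (hg.const_sub (d a + d b)).div_const 2
        rw [show -((1:ℝ) / (κ ^ 2 * (d a - d b))) = -(2 / (κ ^ 2 * (d a - d b))) / 2 by ring]
        simpa using h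
      · simp only [if_neg h1, if_neg h2, hc, h1, h2, if_false]
        exact hasDerivAt_const 0 (d t)
  -- derivative of y
  set v : Fin N → ℝ := fun k => -V * κ * c k / ν with hv
  have hy0 : y 0 = z := by
    funext k
    rw [hy, hs0, hz, hd]
    field_simp
    ring
  have hyd : HasDerivAt y v 0 := by
    rw [hasDerivAt_pi]
    intro k
    have hfe : (fun p => y p k) = fun p => -V * κ * s p k / ν := funext fun p => hy p k
    rw [hfe, hv]
    exact ((hsd k).const_mul (-V * κ)).div_const ν
  -- chain rule
  have hAyd : HasDerivAt (fun p => A (y p)) ((fderiv ℝ A z) v) 0 := by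
    have hfd : HasFDerivAt A (fderiv ℝ A z) (y 0) := by
      rw [hy0]; exact (hA.differentiable one_ne_zero z).hasFDerivAt
    exact hfd.comp_hasDerivAt 0 hyd
  have hvdecomp : v = v a • (Pi.single a 1 : Fin N → ℝ) + v b • (Pi.single b 1 : Fin N → ℝ) := by
    funext k
    simp only [Pi.add_apply, Pi.smul_apply, smul_eq_mul]
    rcases eq_or_ne k a with rfl | hka
    · rw [Pi.single_eq_same, Pi.single_eq_of_ne habne]
      ring
    · rcases eq_or_ne k b with rfl | hkb
      · rw [Pi.single_eq_same, Pi.single_eq_of_ne hbane]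
        ring
      · rw [Pi.single_eq_of_ne hka, Pi.single_eq_of_ne hkb]
        have : c k = 0 := by simp [hc, hka, hkb]
        simp [hv, this]
  have hDA : (fderiv ℝ A z) v = (v a : ℂ) * pd a A z + (v b : ℂ) * pd b A z := by
    rw [hvdecomp, map_add, map_smul, map_smul]
    simp [pd, Complex.real_smul, Pi.single_eq_of_ne habne, Pi.single_eq_of_ne hbane]
  -- product part
  set S := Finset.univ.filter (fun q : Fin N × Fin N => q.1 < q.2) with hSdef
  set DP := ∑ q ∈ S, (∏ r ∈ S.erase q, (d r.2 - d r.1)) * (c q.2 - c q.1) with hDPdef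
  set P0 := ∏ q ∈ S, (d q.2 - d q.1) with hP0def
  have hmemS : ∀ q : Fin N × Fin N, q ∈ S → q.1 < q.2 := fun q hq => (Finset.mem_filter.mp hq).2
  have hfac0 : ∀ q : Fin N × Fin N, q ∈ S → d q.2 - d q.1 ≠ 0 := fun q hq =>
    sub_ne_zero.mpr (hdne _ _ (hmemS q hq).ne')
  have hP00 : P0 ≠ 0 := by
    rw [hP0def]; exact Finset.prod_ne_zero_iff.mpr hfac0
  have hPd : HasDerivAt (fun p => ∏ q ∈ S, (s p q.2 - s p q.1)) DP 0 := by
    have h := HasDerivAt.finset_prod (x := (0 : ℝ)) (u := S)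
      (f := fun (q : Fin N × Fin N) p => s p q.2 - s p q.1)
      (f' := fun q => c q.2 - c q.1) (fun q _ => (hsd q.2).sub (hsd q.1))
    simp only [hs0, smul_eq_mul] at h
    rw [hDPdef]
    rw [Finset.prod_fn] at h
    exact h
  have hP0eq : ∏ q ∈ S, (s 0 q.2 - s 0 q.1) = P0 := by
    rw [hP0def]; exact Finset.prod_congr rfl fun q _ => by rw [hs0, hs0]
  have hPdC : HasDerivAt (fun p => ((∏ q ∈ S, (s p q.2 - s p q.1) : ℝ) : ℂ)) ((DP : ℝ) : ℂ) 0 :=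
    hPd.ofReal_comp
  have hden : ((∏ q ∈ S, (s 0 q.2 - s 0 q.1) : ℝ) : ℂ) ≠ 0 := by
    rw [hP0eq]; exact Complex.ofReal_ne_zero.mpr hP00
  have hD : deriv F 0 = ((fderiv ℝ A z) v * (P0 : ℂ) - A z * (DP : ℂ)) / (P0 : ℂ) ^ 2 := by
    have hFfun : F = fun p => A (y p) /
        ((∏ q ∈ S, (s p q.2 - s p q.1) : ℝ) : ℂ) := funext hF
    have h := (hAyd.div hPdC hden).deriv
    rw [hFfun]
    rw [show deriv (fun p => A (y p) / ((∏ q ∈ S, (s p q.2 - s p q.1) : ℝ) : ℂ)) 0 = _ from h, hy0, hP0eq]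
  have hF0 : F 0 = A z / (P0 : ℂ) := by rw [hF 0, hy0, hP0eq]
  have hP0C : (P0 : ℂ) ≠ 0 := Complex.ofReal_ne_zero.mpr hP00
  have hmain : 1 / (Complex.I * (V : ℂ)) * deriv F 0 / F 0 =
      1 / (Complex.I * (V : ℂ)) * ((fderiv ℝ A z) v / A z - (DP : ℂ) / (P0 : ℂ)) := by
    rw [hD, hF0]
    have hI : Complex.I ≠ 0 := Complex.I_ne_zero
    have hVC : (V : ℂ) ≠ 0 := Complex.ofReal_ne_zero.mpr hV
    field_simp
  -- the combinatorial identity for DP / P0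
  set W : Fin N → Fin N → ℝ := fun u t => c u / (d u - d t) with hW
  have hstep1 : DP / P0 = ∑ q ∈ S, (c q.2 - c q.1) / (d q.2 - d q.1) := by
    rw [hDPdef, Finset.sum_div]
    refine Finset.sum_congr rfl fun q hq => ?_
    have h1 : d q.2 - d q.1 ≠ 0 := hfac0 q hq
    have h2 : ∏ r ∈ S.erase q, (d r.2 - d r.1) ≠ 0 :=
      Finset.prod_ne_zero_iff.mpr fun r hr => hfac0 r (Finset.mem_of_mem_erase hr)
    rw [hP0def, ← Finset.mul_prod_erase S (fun r => d r.2 - d r.1) hq]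
    field_simp
  have hstep2 : ∑ q ∈ S, (c q.2 - c q.1) / (d q.2 - d q.1)
      = ∑ q ∈ S, (W q.2 q.1 + W q.1 q.2) := by
    refine Finset.sum_congr rfl fun q hq => ?_
    have h1 : d q.2 - d q.1 ≠ 0 := hfac0 q hq
    have h1' : d q.1 - d q.2 ≠ 0 := fun h => h1 (by linarith)
    rw [hW]
    field_simp
    ring
  have hstep3 : ∑ q ∈ S, (W q.2 q.1 + W q.1 q.2)
      = ∑ x : Fin N, ∑ u : Fin N, (if x ≠ u then W u x else 0) := by
    rw [hSdef, Finset.sum_filter, Fintype.sum_prod_type]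
    have e1 : ∀ x u : Fin N, (if x < u then W u x + W x u else 0)
        = (if x < u then W u x else 0) + (if x < u then W x u else 0) := by
      intro x u; split_ifs <;> simp
    simp only [e1, Finset.sum_add_distrib]
    have e2 : ∑ x : Fin N, ∑ u : Fin N, (if x < u then W x u else 0)
        = ∑ x : Fin N, ∑ u : Fin N, (if u < x then W u x else 0) := Finset.sum_comm
    rw [e2, ← Finset.sum_add_distrib]
    refine Finset.sum_congr rfl fun x _ => ?_
    rw [← Finset.sum_add_distrib]
    refine Finset.sum_congr rfl fun u _ => ?_
    rcases lt_trichotomy x u with h | h | h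
    · simp [h, h.ne, asymm h]
    · simp [h]
    · simp [h, h.ne', asymm h]
  have hstep4 : ∑ x : Fin N, ∑ u : Fin N, (if x ≠ u then W u x else 0)
      = (∑ i ∈ Finset.univ.filter (fun i => i ≠ a), W a i)
        + ∑ i ∈ Finset.univ.filter (fun i => i ≠ b), W b i := by
    rw [Finset.sum_comm]
    have inner : ∀ u : Fin N, ∑ x : Fin N, (if x ≠ u then W u x else 0)
        = ∑ i ∈ Finset.univ.filter (fun i => i ≠ u), W u i := by
      intro u; rw [Finset.sum_filter]
    have hzero : ∀ u : Fin N, u ∉ ({a, b} : Finset (Fin N)) →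
        ∑ x : Fin N, (if x ≠ u then W u x else 0) = 0 := by
      intro u hu
      simp only [Finset.mem_insert, Finset.mem_singleton, not_or] at hu
      apply Finset.sum_eq_zero
      intro x _
      have hcu : c u = 0 := by simp [hc, hu.1, hu.2]
      simp [hW, hcu]
    have hsub : ∑ u : Fin N, ∑ x : Fin N, (if x ≠ u then W u x else 0)
        = ∑ u ∈ ({a, b} : Finset (Fin N)), ∑ x : Fin N, (if x ≠ u then W u x else 0) := by
      symm
      apply Finset.sum_subset (Finset.subset_univ _)
      intro u _ hu
      exact hzero u hu
    rw [hsub, Finset.sum_insert (by simp [habne]), Finset.sum_singleton, inner a, inner b]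
  have hWa : ∀ i ∈ Finset.univ.filter (fun i => i ≠ a), W a i
      = lam ^ 2 * (1 / ((E a ^ 2 - E i ^ 2) * (E a ^ 2 - E b ^ 2))) := by
    intro i hi
    have hia : i ≠ a := (Finset.mem_filter.mp hi).2
    have hEia : E a ^ 2 - E i ^ 2 ≠ 0 := sub_ne_zero.mpr (hE a i hia.symm)
    have hdai : d a - d i = (E a ^ 2 - E i ^ 2) / (lam * κ) := by rw [hd, hd]; ring
    rw [hW]
    simp only
    rw [hca, hdai, hΔ]
    field_simp
  have hWb : ∀ i ∈ Finset.univ.filter (fun i => i ≠ b), W b i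
      = -(lam ^ 2 * (1 / ((E b ^ 2 - E i ^ 2) * (E a ^ 2 - E b ^ 2)))) := by
    intro i hi
    have hib : i ≠ b := (Finset.mem_filter.mp hi).2
    have hEib : E b ^ 2 - E i ^ 2 ≠ 0 := sub_ne_zero.mpr (hE b i hib.symm)
    have hdbi : d b - d i = (E b ^ 2 - E i ^ 2) / (lam * κ) := by rw [hd, hd]; ring
    rw [hW]
    simp only
    rw [hcb, hdbi, hΔ]
    field_simp
  have key : DP / P0 =
      lam ^ 2 * (∑ i ∈ Finset.univ.filter (fun i => i ≠ a),
          1 / ((E a ^ 2 - E i ^ 2) * (E a ^ 2 - E b ^ 2)))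
      - lam ^ 2 * (∑ i ∈ Finset.univ.filter (fun i => i ≠ b),
          1 / ((E b ^ 2 - E i ^ 2) * (E a ^ 2 - E b ^ 2))) := by
    rw [hstep1, hstep2, hstep3, hstep4, Finset.sum_congr rfl hWa, Finset.sum_congr rfl hWb]
    rw [← Finset.mul_sum]
    rw [Finset.sum_neg_distrib, ← Finset.mul_sum]
    ring
  have keyC : (DP : ℂ) / (P0 : ℂ) =
      (lam : ℂ) ^ 2 * (∑ i ∈ Finset.univ.filter (fun i => i ≠ a),
          1 / (((E a ^ 2 - E i ^ 2 : ℝ) : ℂ) * ((E a ^ 2 - E b ^ 2 : ℝ) : ℂ)))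
      - (lam : ℂ) ^ 2 * (∑ i ∈ Finset.univ.filter (fun i => i ≠ b),
          1 / (((E b ^ 2 - E i ^ 2 : ℝ) : ℂ) * ((E a ^ 2 - E b ^ 2 : ℝ) : ℂ))) := by
    rw [← Complex.ofReal_div, key]
    push_cast
    ring
  -- the values of the derivative at a and b
  have hvaR : v a = -(V * lam) / (ν * (E a ^ 2 - E b ^ 2)) := by
    rw [hv]
    simp only
    rw [hca, hΔ]
    field_simp
  have hvbR : v b = V * lam / (ν * (E a ^ 2 - E b ^ 2)) := by
    rw [hv]
    simp only
    rw [hcb, hΔ]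
    field_simp
  -- final assembly
  have hvaC : ((v a : ℝ) : ℂ) = -((V : ℂ) * (lam : ℂ)) / ((ν : ℂ) * ((E a ^ 2 - E b ^ 2 : ℝ) : ℂ)) := by
    rw [hvaR, Complex.ofReal_div, Complex.ofReal_neg, Complex.ofReal_mul, Complex.ofReal_mul]
  have hvbC : ((v b : ℝ) : ℂ) = (V : ℂ) * (lam : ℂ) / ((ν : ℂ) * ((E a ^ 2 - E b ^ 2 : ℝ) : ℂ)) := by
    rw [hvbR, Complex.ofReal_div, Complex.ofReal_mul, Complex.ofReal_mul]
  rw [hmain, hDA, keyC, hvaC, hvbC]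
  have hI : Complex.I ≠ 0 := Complex.I_ne_zero
  have hVC : (V : ℂ) ≠ 0 := Complex.ofReal_ne_zero.mpr hV
  have hνC : (ν : ℂ) ≠ 0 := Complex.ofReal_ne_zero.mpr hν0
  have hEabC : ((E a ^ 2 - E b ^ 2 : ℝ) : ℂ) ≠ 0 := Complex.ofReal_ne_zero.mpr hEab0
  generalize (∑ i ∈ Finset.univ.filter (fun i => i ≠ a),
      1 / (((E a ^ 2 - E i ^ 2 : ℝ) : ℂ) * ((E a ^ 2 - E b ^ 2 : ℝ) : ℂ))) = Sa
  generalize (∑ i ∈ Finset.univ.filter (fun i => i ≠ b),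
      1 / (((E b ^ 2 - E i ^ 2 : ℝ) : ℂ) * ((E a ^ 2 - E b ^ 2 : ℝ) : ℂ))) = Sb
  generalize ((E a ^ 2 - E b ^ 2 : ℝ) : ℂ) = Eab at hEabC ⊢
  have e1 : 1 / (Complex.I * (V : ℂ)) * (-((V : ℂ) * (lam : ℂ)) / ((ν : ℂ) * Eab) * pd a A z / A z)
      = -((lam : ℂ) / (Complex.I * (ν : ℂ)) * (1 / Eab) * pd a A z / A z) := by
    field_simp
  have e2 : 1 / (Complex.I * (V : ℂ)) * ((V : ℂ) * (lam : ℂ) / ((ν : ℂ) * Eab) * pd b A z / A z)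
      = (lam : ℂ) / (Complex.I * (ν : ℂ)) * (1 / Eab) * pd b A z / A z := by
    field_simp
  calc 1 / (Complex.I * (V : ℂ)) *
      ((-((V : ℂ) * (lam : ℂ)) / ((ν : ℂ) * Eab) * pd a A z
          + (V : ℂ) * (lam : ℂ) / ((ν : ℂ) * Eab) * pd b A z) / A z
        - ((lam : ℂ) ^ 2 * Sa - (lam : ℂ) ^ 2 * Sb))
      = 1 / (Complex.I * (V : ℂ)) * (-((V : ℂ) * (lam : ℂ)) / ((ν : ℂ) * Eab) * pd a A z / A z)
        + 1 / (Complex.I * (V : ℂ)) * ((V : ℂ) * (lam : ℂ) / ((ν : ℂ) * Eab) * pd b A z / A z)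
        + (-((lam : ℂ) ^ 2 / (Complex.I * (V : ℂ))) * Sa
            + (lam : ℂ) ^ 2 / (Complex.I * (V : ℂ)) * Sb) := by ring
    _ = _ := by rw [e1, e2]; ring
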